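/- arXiv:2011.06114 — 3 statements merged into one kernel-verified Lean document; each statement's English description precedes it below -/
import Mathlib

section
/- (Leak criterion.) Let ℐ be a family of subsets of {1,…,N}, and let I, J ⊆ {1,…,N} be disjoint. Then the restriction of Λ_ℐ over the relatively open face relint(−τ_I + τ_J) differs from the restriction of the full skeleton Λ_full, i.e. Λ_ℐ ∩ (relint(−τ_I+τ_J) × ℝ^N) ≠ Λ_full ∩ (relint(−τ_I+τ_J) × ℝ^N), if and only if I ∪ J' ∉ ℐ for every J' ⊆ J. -/
open Pointwise

/-- The partial conormal Lagrangian `Λ_I`. -/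
def LambdaI {N : ℕ} (I : Set (Fin N)) : Set ((Fin N → ℝ) × (Fin N → ℝ)) :=
  {p | ∀ i, (i ∈ I → p.2 i = 0) ∧
    (i ∉ I → (0 < p.1 i ∧ p.2 i = 0) ∨ (p.1 i = 0 ∧ p.2 i ≤ 0))}

/-- The rectilinear skeleton `Λ_ℐ = ⋃_{I ∈ ℐ} Λ_I`. -/
def LambdaFam {N : ℕ} (𝓘 : Set (Set (Fin N))) :
    Set ((Fin N → ℝ) × (Fin N → ℝ)) :=
  ⋃ I ∈ 𝓘, LambdaI I

/-- The relatively open face `relint(−τ_I + τ_J)` for disjoint `I, J`. -/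
def faceRelInt {N : ℕ} (I J : Set (Fin N)) : Set (Fin N → ℝ) :=
  {x | (∀ i ∈ I, x i < 0) ∧ (∀ j ∈ J, 0 < x j) ∧
    ∀ l, l ∉ I → l ∉ J → x l = 0}

/-- **Lemma (leak criterion).**  For disjoint `I, J`, the restriction of `Λ_ℐ`
over `relint(−τ_I + τ_J)` differs from that of the full skeleton `Λ_full` iff
`I ∪ J' ∉ ℐ` for every `J' ⊆ J`. -/
theorem leak_criterion
    {N : ℕ} (𝓘 : Set (Set (Fin N)))
    (I J : Set (Fin N)) (hIJ : Disjoint I J) :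
    (LambdaFam 𝓘 ∩ (faceRelInt I J ×ˢ (Set.univ : Set (Fin N → ℝ))) ≠
        LambdaFam (Set.univ : Set (Set (Fin N))) ∩
          (faceRelInt I J ×ˢ (Set.univ : Set (Fin N → ℝ)))) ↔
      ∀ J' ⊆ J, I ∪ J' ∉ 𝓘 := by
  classical
  -- Helper: over the face, membership in some `Λ_K` implies membership in `Λ_{I ∪ J''}`
  -- for any `J'' ⊆ J`.
  have helper : ∀ (x ξ : Fin N → ℝ), x ∈ faceRelInt I J →
      ∀ K : Set (Fin N), (x, ξ) ∈ LambdaI K →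
      ∀ J'' ⊆ J, (x, ξ) ∈ LambdaI (I ∪ J'') := by
    intro x ξ hx K hK J'' hJ'' i
    obtain ⟨h1, h2, h3⟩ := hx
    constructor
    · rintro (hiI | hiJ'')
      · by_cases hk : i ∈ K
        · exact (hK i).1 hk
        · rcases (hK i).2 hk with ⟨hp, _⟩ | ⟨hp, _⟩
          · linarith [h1 i hiI]
          · linarith [h1 i hiI]
      · have hxj : 0 < x i := h2 i (hJ'' hiJ'')
        by_cases hk : i ∈ K
        · exact (hK i).1 hk
        · rcases (hK i).2 hk with ⟨_, hξ⟩ | ⟨hp, _⟩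
          · exact hξ
          · linarith
    · intro hi
      have hiI : i ∉ I := fun h => hi (Or.inl h)
      by_cases hiJ : i ∈ J
      · left
        refine ⟨h2 i hiJ, ?_⟩
        by_cases hk : i ∈ K
        · exact (hK i).1 hk
        · rcases (hK i).2 hk with ⟨_, hξ⟩ | ⟨hp, _⟩
          · exact hξ
          · linarith [h2 i hiJ]
      · right
        refine ⟨h3 i hiI hiJ, ?_⟩
        by_cases hk : i ∈ K
        · exact le_of_eq ((hK i).1 hk)
        · rcases (hK i).2 hk with ⟨hp, _⟩ | ⟨_, hξ⟩
          · linarith [h3 i hiI hiJ]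
          · exact hξ
  constructor
  · -- if the restrictions differ, no `I ∪ J'` lies in `𝓘`
    intro hne J' hJ' hmem
    apply hne
    apply Set.Subset.antisymm
    · apply Set.inter_subset_inter_left
      intro p hp
      simp only [LambdaFam, Set.mem_iUnion] at hp ⊢
      obtain ⟨K, _, hpK⟩ := hp
      exact ⟨K, trivial, hpK⟩
    · rintro ⟨x, ξ⟩ ⟨hfull, hface, -⟩
      refine ⟨?_, hface, trivial⟩
      simp only [LambdaFam, Set.mem_iUnion] at hfull ⊢
      obtain ⟨K, -, hK⟩ := hfull
      exact ⟨I ∪ J', hmem, helper x ξ hface K hK J' hJ'⟩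
  · -- if no `I ∪ J'` lies in `𝓘`, exhibit a point separating the two sets
    intro h heq
    set x₀ : Fin N → ℝ := fun i => if i ∈ I then -1 else if i ∈ J then 1 else 0
      with hx₀
    set ξ₀ : Fin N → ℝ := fun i => if i ∈ I ∨ i ∈ J then 0 else -1 with hξ₀
    have hxface : x₀ ∈ faceRelInt I J := by
      refine ⟨fun i hi => ?_, fun j hj => ?_, fun l hl hl' => ?_⟩
      · simp [hx₀, hi]
      · have hjI : j ∉ I := Set.disjoint_right.mp hIJ hj
        simp [hx₀, hjI, hj]
      · simp [hx₀, hl, hl']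
    have hpI : (x₀, ξ₀) ∈ LambdaI I := by
      intro i
      constructor
      · intro hi
        simp [hξ₀, hi]
      · intro hi
        by_cases hiJ : i ∈ J
        · left
          constructor
          · simp [hx₀, hi, hiJ]
          · simp [hξ₀, hiJ]
        · right
          constructor
          · simp [hx₀, hi, hiJ]
          · simp [hξ₀, hi, hiJ]
    have hpfull : (x₀, ξ₀) ∈ LambdaFam (Set.univ : Set (Set (Fin N))) ∩
        (faceRelInt I J ×ˢ (Set.univ : Set (Fin N → ℝ))) := by
      refine ⟨?_, hxface, trivial⟩
      simp only [LambdaFam, Set.mem_iUnion]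
      exact ⟨I, trivial, hpI⟩
    rw [← heq] at hpfull
    obtain ⟨hp𝓘, -⟩ := hpfull
    simp only [LambdaFam, Set.mem_iUnion] at hp𝓘
    obtain ⟨K, hK𝓘, hK⟩ := hp𝓘
    -- show `I ⊆ K` and `K ⊆ I ∪ J`
    have hIK : I ⊆ K := by
      intro i hi
      by_contra hk
      rcases (hK i).2 hk with ⟨hp, _⟩ | ⟨hp, _⟩
      · have : x₀ i = -1 := by simp [hx₀, hi]
        linarith
      · have : x₀ i = -1 := by simp [hx₀, hi]
        linarith
    have hKIJ : K ⊆ I ∪ J := by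
      intro k hk
      by_contra hkij
      have h1 : k ∉ I := fun h => hkij (Or.inl h)
      have h2 : k ∉ J := fun h => hkij (Or.inr h)
      have hξk : ξ₀ k = 0 := (hK k).1 hk
      have : ξ₀ k = -1 := by simp [hξ₀, h1, h2]
      linarith
    have hKeq : K = I ∪ (K ∩ J) := by
      apply Set.Subset.antisymm
      · intro k hk
        rcases hKIJ hk with h | h
        · exact Or.inl h
        · exact Or.inr ⟨hk, h⟩
      · rintro k (hk | ⟨hk, -⟩)
        · exact hIK hk
        · exact hk
    exact h (K ∩ J) Set.inter_subset_right (hKeq ▸ hK𝓘)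
end

section
/- Assume quasi-symmetry. Then for every linear subspace V ⊆ ℝ^k, the convex cone generated by {β_i : β_i ∈ V} equals the linear span of {β_i : β_i ∈ V}. -/
open Pointwise
open scoped Classical

/-- **Lemma.** Under quasi-symmetry, for every linear subspace `V ⊆ ℝ^k`, the
convex cone generated by `{β_i : β_i ∈ V}` equals the linear span of
`{β_i : β_i ∈ V}`. -/
theorem cone_eq_span_of_betas_in_subspace
    {N k : ℕ} (hk : 1 ≤ k) (hNk : k ≤ N)
    (μ : (Fin N → ℝ) →ₗ[ℝ] (Fin k → ℝ))
    (hsurj : Function.Surjective μ)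
    (β : Fin N → (Fin k → ℝ)) (hβ : ∀ i, β i = μ (Pi.single i 1))
    (hβ0 : ∀ i, β i ≠ 0)
    (hspan : Submodule.span ℝ (Set.range β) = ⊤)
    -- quasi-symmetry
    (hqs : ∀ L : Submodule ℝ (Fin k → ℝ), Module.finrank ℝ L = 1 →
      ∑ i ∈ Finset.univ.filter (fun i => β i ∈ L), β i = 0)
    (V : Submodule ℝ (Fin k → ℝ)) :
    {y : Fin k → ℝ | ∃ c : Fin N → ℝ, (∀ i, 0 ≤ c i) ∧
        (∀ i, β i ∉ V → c i = 0) ∧ y = ∑ i, c i • β i} =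
      (Submodule.span ℝ {x | ∃ i, β i ∈ V ∧ β i = x} : Set (Fin k → ℝ)) := by
  set C : Set (Fin k → ℝ) := {y : Fin k → ℝ | ∃ c : Fin N → ℝ, (∀ i, 0 ≤ c i) ∧
      (∀ i, β i ∉ V → c i = 0) ∧ y = ∑ i, c i • β i} with hC
  set S : Set (Fin k → ℝ) := {x | ∃ i, β i ∈ V ∧ β i = x} with hS
  -- basic closure properties of C
  have hzero : (0 : Fin k → ℝ) ∈ C := ⟨0, fun i => le_refl 0, fun i _ => rfl, by simp⟩
  have hadd : ∀ x ∈ C, ∀ y ∈ C, x + y ∈ C := by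
    rintro x ⟨c, hc0, hcV, rfl⟩ y ⟨d, hd0, hdV, rfl⟩
    refine ⟨c + d, fun i => add_nonneg (hc0 i) (hd0 i),
      fun i hi => by simp [hcV i hi, hdV i hi], ?_⟩
    rw [← Finset.sum_add_distrib]
    simp [add_smul]
  have hsmul : ∀ t : ℝ, 0 ≤ t → ∀ x ∈ C, t • x ∈ C := by
    rintro t ht x ⟨c, hc0, hcV, rfl⟩
    refine ⟨t • c, fun i => mul_nonneg ht (hc0 i),
      fun i hi => by simp [hcV i hi], ?_⟩
    rw [Finset.smul_sum]
    simp [smul_smul]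
  have hmem : ∀ j, β j ∈ V → β j ∈ C := by
    intro j hj
    refine ⟨Pi.single j 1, fun i => ?_, fun i hi => ?_, ?_⟩
    · by_cases h : i = j <;> simp [Pi.single_apply, h]
    · by_cases h : i = j
      · exact absurd (h ▸ hj) hi
      · simp [Pi.single_apply, h]
    · rw [Finset.sum_eq_single j]
      · simp
      · intro b _ hb; simp [Pi.single_apply, hb]
      · intro h; exact absurd (Finset.mem_univ j) h
  have hneg : ∀ j, β j ∈ V → -β j ∈ C := by
    intro j hj
    set L : Submodule ℝ (Fin k → ℝ) := Submodule.span ℝ {β j} with hL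
    have hLr : Module.finrank ℝ L = 1 := finrank_span_singleton (hβ0 j)
    have hsum := hqs L hLr
    have hLV : (L : Set (Fin k → ℝ)) ⊆ V := by
      rw [hL]
      exact Submodule.span_le.mpr (by simpa using hj)
    have hjL : β j ∈ L := Submodule.mem_span_singleton_self _
    refine ⟨fun i => if β i ∈ L ∧ i ≠ j then 1 else 0,
      fun i => by by_cases h : β i ∈ L ∧ i ≠ j <;> simp [h],
      fun i hi => ?_, ?_⟩
    · by_cases h : β i ∈ L ∧ i ≠ j
      · exact absurd (hLV h.1) hi
      · simp [h]
    · have key : ∑ i, (if β i ∈ L ∧ i ≠ j then (1:ℝ) else 0) • β i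
          = ∑ i ∈ Finset.univ.filter (fun i => β i ∈ L ∧ i ≠ j), β i := by
        rw [Finset.sum_filter]
        apply Finset.sum_congr rfl
        intro i _
        split <;> simp
      have hfe : Finset.univ.filter (fun i => β i ∈ L ∧ i ≠ j)
          = (Finset.univ.filter (fun i => β i ∈ L)).erase j := by
        ext i
        simp [Finset.mem_erase, and_comm]
      have hjmem : j ∈ Finset.univ.filter (fun i => β i ∈ L) := by
        simp [hjL]
      rw [key, hfe, Finset.sum_erase_eq_sub hjmem, hsum, zero_sub]
  -- the two inclusions
  ext y
  simp only [Set.mem_setOf_eq, SetLike.mem_coe]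
  constructor
  · rintro ⟨c, hc0, hcV, rfl⟩
    apply Submodule.sum_mem
    intro i _
    by_cases h : β i ∈ V
    · exact Submodule.smul_mem _ _ (Submodule.subset_span ⟨i, h, rfl⟩)
    · simp [hcV i h]
  · intro hy
    have : y ∈ C ∧ -y ∈ C := by
      induction hy using Submodule.span_induction with
      | mem x hx =>
        obtain ⟨i, hi, rfl⟩ := hx
        exact ⟨hmem i hi, hneg i hi⟩
      | zero => exact ⟨hzero, by simpa using hzero⟩
      | add x z hx hz ihx ihz =>
        exact ⟨hadd x ihx.1 z ihz.1, by
          rw [neg_add]; exact hadd _ ihx.2 _ ihz.2⟩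
      | smul a x hx ih =>
        rcases le_or_gt 0 a with ha | ha
        · exact ⟨hsmul a ha x ih.1, by
            rw [← smul_neg]; exact hsmul a ha _ ih.2⟩
        · constructor
          · have : a • x = (-a) • (-x) := by simp
            rw [this]; exact hsmul (-a) (by linarith) _ ih.2
          · have : -(a • x) = (-a) • x := by simp
            rw [this]; exact hsmul (-a) (by linarith) _ ih.1
    exact this.1
end

section
/- Let η_1,…,η_m > 0, 𝔹 = ∏_{i=1}^m [−η_i/2, η_i/2], and let D = ∏_{i=1}^m D_i ⊆ ℝ^m be a coordinate cone, i.e. each D_i ∈ {{0}, [0,∞), (−∞,0], ℝ}. Then for every set K ⊆ ℝ^m and every sign vector s ∈ {+,−,0}^m: K ∩ (𝔹 − D) ∩ Int(𝔹_s) ≠ ∅ if and only if (K ∩ Int(𝔹_s) ≠ ∅ and σ_s ⊆ −D). In particular, Int(𝔹_s) ∩ (𝔹 − D) ≠ ∅ ⟺ Int(𝔹_s) ⊆ 𝔹 − D ⟺ σ_s ⊆ −D. -/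
open Pointwise

noncomputable section

/-- The box `𝔹 = ∏ᵢ [−η_i/2, η_i/2]`. -/
def boxB {m : ℕ} (η : Fin m → ℝ) : Set (Fin m → ℝ) :=
  {x | ∀ i, -(η i) / 2 ≤ x i ∧ x i ≤ η i / 2}

/-- The coordinate cone `σ_s` associated to a sign vector `s`. -/
def sigmaCone {m : ℕ} (s : Fin m → SignType) : Set (Fin m → ℝ) :=
  {x | ∀ i, (s i = 1 → 0 ≤ x i) ∧ (s i = -1 → x i ≤ 0) ∧ (s i = 0 → x i = 0)}

/-- The shift `δ_s`. -/
def deltaS {m : ℕ} (η : Fin m → ℝ) (s : Fin m → SignType) : Fin m → ℝ :=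
  fun i => (s i : ℝ) * η i

/-- The thick cone `𝔹_s = 𝔹 + σ_s + δ_s`. -/
def thickCone {m : ℕ} (η : Fin m → ℝ) (s : Fin m → SignType) :
    Set (Fin m → ℝ) :=
  {x | ∃ bb ∈ boxB η, ∃ c ∈ sigmaCone s, x = bb + c + deltaS η s}

/-- Per-coordinate closed set of the thick cone. -/
def coordC (a : ℝ) (s : SignType) : Set ℝ :=
  match s with
  | SignType.zero => Set.Icc (-a/2) (a/2)
  | SignType.pos => Set.Ici (a/2)
  | SignType.neg => Set.Iic (-a/2)

lemma coord_decomp (a t : ℝ) (ha : 0 < a) (s : SignType) (ht : t ∈ coordC a s) :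
    ∃ b c : ℝ, (-a/2 ≤ b ∧ b ≤ a/2) ∧
      ((s = 1 → 0 ≤ c) ∧ (s = -1 → c ≤ 0) ∧ (s = 0 → c = 0)) ∧
      t = b + c + (s : ℝ) * a := by
  cases s with
  | zero =>
    simp only [coordC, Set.mem_Icc] at ht
    refine ⟨t, 0, ⟨ht.1, ht.2⟩, ⟨fun h => le_rfl, fun h => le_rfl, fun _ => rfl⟩, ?_⟩
    have h0 : ((SignType.zero : SignType) : ℝ) = 0 := rfl
    rw [h0]; ring
  | pos =>
    simp only [coordC, Set.mem_Ici] at ht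
    refine ⟨min (t - a) (a/2), t - a - min (t - a) (a/2),
      ⟨le_min (by linarith) (by linarith), min_le_right _ _⟩,
      ⟨fun _ => ?_, fun h => absurd h (by decide), fun h => absurd h (by decide)⟩, ?_⟩
    · have := min_le_left (t - a) (a/2); linarith
    · have h0 : ((SignType.pos : SignType) : ℝ) = 1 := rfl
      rw [h0]; ring
  | neg =>
    simp only [coordC, Set.mem_Iic] at ht
    refine ⟨max (t + a) (-a/2), t + a - max (t + a) (-a/2),
      ⟨le_max_right _ _, max_le (by linarith) (by linarith)⟩,
      ⟨fun h => absurd h (by decide), fun _ => ?_, fun h => absurd h (by decide)⟩, ?_⟩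
    · have := le_max_left (t + a) (-a/2); linarith
    · have h0 : ((SignType.neg : SignType) : ℝ) = -1 := rfl
      rw [h0]; ring

lemma thickCone_eq {m : ℕ} (η : Fin m → ℝ) (hη : ∀ i, 0 < η i) (s : Fin m → SignType) :
    thickCone η s = Set.univ.pi (fun i => coordC (η i) (s i)) := by
  ext x
  constructor
  · rintro ⟨bb, hbb, c, hc, rfl⟩ i -
    obtain ⟨h1, h2⟩ := hbb i
    obtain ⟨hp, hn, hz⟩ := hc i
    cases h : s i with
    | zero =>
      have := hz h
      simp only [coordC, Pi.add_apply, deltaS, h, Set.mem_Icc]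
      have h0 : ((SignType.zero : SignType) : ℝ) = 0 := rfl
      rw [h0]
      constructor <;> linarith
    | pos =>
      have := hp h
      simp only [coordC, Pi.add_apply, deltaS, h, Set.mem_Ici]
      have h0 : ((SignType.pos : SignType) : ℝ) = 1 := rfl
      rw [h0]
      nlinarith [hη i]
    | neg =>
      have := hn h
      simp only [coordC, Pi.add_apply, deltaS, h, Set.mem_Iic]
      have h0 : ((SignType.neg : SignType) : ℝ) = -1 := rfl
      rw [h0]
      nlinarith [hη i]
  · intro hx
    choose b c hb hc hbc using fun i => coord_decomp (η i) (x i) (hη i) (s i) (hx i (Set.mem_univ i))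
    exact ⟨b, hb, c, hc, funext fun i => by simpa [deltaS] using hbc i⟩

/-- Per-coordinate `𝔹ᵢ − Dᵢ`. -/
def coordE (a : ℝ) (D : Set ℝ) : Set ℝ :=
  {t | ∃ b ∈ Set.Icc (-a/2) (a/2), ∃ d ∈ D, t = b - d}

lemma coord_key (a : ℝ) (ha : 0 < a) (D : Set ℝ)
    (hD : D = {0} ∨ D = Set.Ici (0:ℝ) ∨ D = Set.Iic (0:ℝ) ∨ D = Set.univ) (s : SignType) :
    ((interior (coordC a s) ∩ coordE a D).Nonempty ↔
      ∀ t : ℝ, ((s = 1 → 0 ≤ t) ∧ (s = -1 → t ≤ 0) ∧ (s = 0 → t = 0)) → -t ∈ D) ∧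
    ((∀ t : ℝ, ((s = 1 → 0 ≤ t) ∧ (s = -1 → t ≤ 0) ∧ (s = 0 → t = 0)) → -t ∈ D) →
      interior (coordC a s) ⊆ coordE a D) ∧
    (interior (coordC a s)).Nonempty := by
  have h0D : (0:ℝ) ∈ D := by rcases hD with rfl|rfl|rfl|rfl <;> simp
  cases s with
  | zero =>
    have hint : interior (coordC a SignType.zero) = Set.Ioo (-a/2) (a/2) := by
      rw [show coordC a SignType.zero = Set.Icc (-a/2) (a/2) from rfl, interior_Icc]
    have hP : ∀ t : ℝ, ((SignType.zero = 1 → 0 ≤ t) ∧ (SignType.zero = -1 → t ≤ 0) ∧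
        (SignType.zero = 0 → t = 0)) → -t ∈ D := by
      intro t ht
      rw [ht.2.2 rfl, neg_zero]; exact h0D
    have hsub : interior (coordC a SignType.zero) ⊆ coordE a D := by
      intro t ht
      rw [hint, Set.mem_Ioo] at ht
      exact ⟨t, ⟨le_of_lt ht.1, le_of_lt ht.2⟩, 0, h0D, by ring⟩
    have hne : (interior (coordC a SignType.zero)).Nonempty := by
      refine ⟨0, ?_⟩
      rw [hint]
      exact Set.mem_Ioo.mpr ⟨by linarith, by linarith⟩
    obtain ⟨x, hx⟩ := hne
    exact ⟨⟨fun _ => hP, fun _ => ⟨x, hx, hsub hx⟩⟩, fun _ => hsub, ⟨x, hx⟩⟩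
  | pos =>
    have hint : interior (coordC a SignType.pos) = Set.Ioi (a/2) := by
      rw [show coordC a SignType.pos = Set.Ici (a/2) from rfl, interior_Ici]
    have hne : (interior (coordC a SignType.pos)).Nonempty := by
      refine ⟨a, ?_⟩; rw [hint]; exact Set.mem_Ioi.mpr (by linarith)
    rcases hD with rfl|rfl|rfl|rfl
    · have hnP : ¬ (∀ t : ℝ, ((SignType.pos = 1 → 0 ≤ t) ∧ (SignType.pos = -1 → t ≤ 0) ∧
          (SignType.pos = 0 → t = 0)) → -t ∈ ({0} : Set ℝ)) := by
        intro hP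
        have := hP 1 ⟨fun _ => zero_le_one, fun h => absurd h (by decide),
          fun h => absurd h (by decide)⟩
        rw [Set.mem_singleton_iff] at this; norm_num at this
      have hempty : ¬ (interior (coordC a SignType.pos) ∩ coordE a {0}).Nonempty := by
        rintro ⟨x, hx1, hx2⟩
        rw [hint, Set.mem_Ioi] at hx1
        obtain ⟨b, hb, d, hd, rfl⟩ := hx2
        rw [Set.mem_singleton_iff] at hd
        subst hd; linarith [hb.2]
      exact ⟨⟨fun h => absurd h hempty, fun h => absurd h hnP⟩, fun h => absurd h hnP, hne⟩
    · have hnP : ¬ (∀ t : ℝ, ((SignType.pos = 1 → 0 ≤ t) ∧ (SignType.pos = -1 → t ≤ 0) ∧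
          (SignType.pos = 0 → t = 0)) → -t ∈ Set.Ici (0:ℝ)) := by
        intro hP
        have := hP 1 ⟨fun _ => zero_le_one, fun h => absurd h (by decide),
          fun h => absurd h (by decide)⟩
        rw [Set.mem_Ici] at this; norm_num at this
      have hempty : ¬ (interior (coordC a SignType.pos) ∩ coordE a (Set.Ici 0)).Nonempty := by
        rintro ⟨x, hx1, hx2⟩
        rw [hint, Set.mem_Ioi] at hx1
        obtain ⟨b, hb, d, hd, rfl⟩ := hx2
        rw [Set.mem_Ici] at hd
        linarith [hb.2]
      exact ⟨⟨fun h => absurd h hempty, fun h => absurd h hnP⟩, fun h => absurd h hnP, hne⟩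
    · have hP : ∀ t : ℝ, ((SignType.pos = 1 → 0 ≤ t) ∧ (SignType.pos = -1 → t ≤ 0) ∧
          (SignType.pos = 0 → t = 0)) → -t ∈ Set.Iic (0:ℝ) := by
        intro t ht
        have := ht.1 rfl
        exact Set.mem_Iic.mpr (by linarith)
      have hsub : interior (coordC a SignType.pos) ⊆ coordE a (Set.Iic 0) := by
        intro t ht
        rw [hint, Set.mem_Ioi] at ht
        exact ⟨a/2, ⟨by linarith, le_rfl⟩, a/2 - t, Set.mem_Iic.mpr (by linarith), by ring⟩
      obtain ⟨x, hx⟩ := hne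
      exact ⟨⟨fun _ => hP, fun _ => ⟨x, hx, hsub hx⟩⟩, fun _ => hsub, ⟨x, hx⟩⟩
    · have hP : ∀ t : ℝ, ((SignType.pos = 1 → 0 ≤ t) ∧ (SignType.pos = -1 → t ≤ 0) ∧
          (SignType.pos = 0 → t = 0)) → -t ∈ (Set.univ : Set ℝ) := fun _ _ => Set.mem_univ _
      have hsub : interior (coordC a SignType.pos) ⊆ coordE a Set.univ := by
        intro t ht
        rw [hint, Set.mem_Ioi] at ht
        exact ⟨a/2, ⟨by linarith, le_rfl⟩, a/2 - t, Set.mem_univ _, by ring⟩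
      obtain ⟨x, hx⟩ := hne
      exact ⟨⟨fun _ => hP, fun _ => ⟨x, hx, hsub hx⟩⟩, fun _ => hsub, ⟨x, hx⟩⟩
  | neg =>
    have hint : interior (coordC a SignType.neg) = Set.Iio (-a/2) := by
      rw [show coordC a SignType.neg = Set.Iic (-a/2) from rfl, interior_Iic]
    have hne : (interior (coordC a SignType.neg)).Nonempty := by
      refine ⟨-a, ?_⟩; rw [hint]; exact Set.mem_Iio.mpr (by linarith)
    rcases hD with rfl|rfl|rfl|rfl
    · have hnP : ¬ (∀ t : ℝ, ((SignType.neg = 1 → 0 ≤ t) ∧ (SignType.neg = -1 → t ≤ 0) ∧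
          (SignType.neg = 0 → t = 0)) → -t ∈ ({0} : Set ℝ)) := by
        intro hP
        have := hP (-1) ⟨fun h => absurd h (by decide), fun _ => by norm_num,
          fun h => absurd h (by decide)⟩
        rw [Set.mem_singleton_iff] at this; norm_num at this
      have hempty : ¬ (interior (coordC a SignType.neg) ∩ coordE a {0}).Nonempty := by
        rintro ⟨x, hx1, hx2⟩
        rw [hint, Set.mem_Iio] at hx1
        obtain ⟨b, hb, d, hd, rfl⟩ := hx2
        rw [Set.mem_singleton_iff] at hd
        subst hd; linarith [hb.1]
      exact ⟨⟨fun h => absurd h hempty, fun h => absurd h hnP⟩, fun h => absurd h hnP, hne⟩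
    · have hP : ∀ t : ℝ, ((SignType.neg = 1 → 0 ≤ t) ∧ (SignType.neg = -1 → t ≤ 0) ∧
          (SignType.neg = 0 → t = 0)) → -t ∈ Set.Ici (0:ℝ) := by
        intro t ht
        have := ht.2.1 rfl
        exact Set.mem_Ici.mpr (by linarith)
      have hsub : interior (coordC a SignType.neg) ⊆ coordE a (Set.Ici 0) := by
        intro t ht
        rw [hint, Set.mem_Iio] at ht
        exact ⟨-a/2, ⟨le_rfl, by linarith⟩, -a/2 - t, Set.mem_Ici.mpr (by linarith), by ring⟩
      obtain ⟨x, hx⟩ := hne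
      exact ⟨⟨fun _ => hP, fun _ => ⟨x, hx, hsub hx⟩⟩, fun _ => hsub, ⟨x, hx⟩⟩
    · have hnP : ¬ (∀ t : ℝ, ((SignType.neg = 1 → 0 ≤ t) ∧ (SignType.neg = -1 → t ≤ 0) ∧
          (SignType.neg = 0 → t = 0)) → -t ∈ Set.Iic (0:ℝ)) := by
        intro hP
        have := hP (-1) ⟨fun h => absurd h (by decide), fun _ => by norm_num,
          fun h => absurd h (by decide)⟩
        rw [Set.mem_Iic] at this; norm_num at this
      have hempty : ¬ (interior (coordC a SignType.neg) ∩ coordE a (Set.Iic 0)).Nonempty := by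
        rintro ⟨x, hx1, hx2⟩
        rw [hint, Set.mem_Iio] at hx1
        obtain ⟨b, hb, d, hd, rfl⟩ := hx2
        rw [Set.mem_Iic] at hd
        linarith [hb.1]
      exact ⟨⟨fun h => absurd h hempty, fun h => absurd h hnP⟩, fun h => absurd h hnP, hne⟩
    · have hP : ∀ t : ℝ, ((SignType.neg = 1 → 0 ≤ t) ∧ (SignType.neg = -1 → t ≤ 0) ∧
          (SignType.neg = 0 → t = 0)) → -t ∈ (Set.univ : Set ℝ) := fun _ _ => Set.mem_univ _
      have hsub : interior (coordC a SignType.neg) ⊆ coordE a Set.univ := by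
        intro t ht
        rw [hint, Set.mem_Iio] at ht
        exact ⟨-a/2, ⟨le_rfl, by linarith⟩, -a/2 - t, Set.mem_univ _, by ring⟩
      obtain ⟨x, hx⟩ := hne
      exact ⟨⟨fun _ => hP, fun _ => ⟨x, hx, hsub hx⟩⟩, fun _ => hsub, ⟨x, hx⟩⟩

lemma BD_eq {m : ℕ} (η : Fin m → ℝ) (D : Fin m → Set ℝ) :
    {x : Fin m → ℝ | ∃ bb ∈ boxB η, ∃ d : Fin m → ℝ, (∀ i, d i ∈ D i) ∧ x = bb - d} =
      Set.univ.pi (fun i => coordE (η i) (D i)) := by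
  ext x
  constructor
  · rintro ⟨bb, hbb, d, hd, rfl⟩ i -
    exact ⟨bb i, ⟨(hbb i).1, (hbb i).2⟩, d i, hd i, rfl⟩
  · intro hx
    choose b hb d hd hbd using fun i => hx i (Set.mem_univ i)
    exact ⟨b, fun i => ⟨(hb i).1, (hb i).2⟩, d, hd, funext fun i => hbd i⟩

lemma sigma_iff {m : ℕ} (D : Fin m → Set ℝ) (s : Fin m → SignType) :
    sigmaCone s ⊆ {x : Fin m → ℝ | ∀ i, -x i ∈ D i} ↔
      ∀ i, ∀ t : ℝ, ((s i = 1 → 0 ≤ t) ∧ (s i = -1 → t ≤ 0) ∧ (s i = 0 → t = 0)) →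
        -t ∈ D i := by
  classical
  constructor
  · intro h i t ht
    have hx : Function.update (0 : Fin m → ℝ) i t ∈ sigmaCone s := by
      intro j
      by_cases hj : j = i
      · subst hj; simpa using ht
      · simp [Function.update_of_ne hj]
    have := h hx i
    simpa using this
  · intro h x hx i
    exact h i (x i) (hx i)

/-- **Lemma.** Let `𝔹` be the box and `D = ∏ᵢ D_i` a coordinate cone (each
`D_i ∈ {{0}, [0,∞), (−∞,0], ℝ}`).  Then for every `K ⊆ ℝ^m` and sign vector `s`:
`K ∩ (𝔹 − D) ∩ Int(𝔹_s) ≠ ∅` iff (`K ∩ Int(𝔹_s) ≠ ∅` and `σ_s ⊆ −D`); in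
particular `Int(𝔹_s) ∩ (𝔹 − D) ≠ ∅` iff `Int(𝔹_s) ⊆ 𝔹 − D` iff `σ_s ⊆ −D`. -/
theorem box_minus_cone_meets_interior_thick_cone
    {m : ℕ} (η : Fin m → ℝ) (hη : ∀ i, 0 < η i)
    (D : Fin m → Set ℝ)
    (hD : ∀ i, D i = {0} ∨ D i = Set.Ici (0 : ℝ) ∨ D i = Set.Iic (0 : ℝ) ∨
      D i = Set.univ)
    (K : Set (Fin m → ℝ)) (s : Fin m → SignType) :
    ((K ∩ {x | ∃ bb ∈ boxB η, ∃ d : Fin m → ℝ, (∀ i, d i ∈ D i) ∧ x = bb - d} ∩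
          interior (thickCone η s)).Nonempty ↔
        ((K ∩ interior (thickCone η s)).Nonempty ∧
          sigmaCone s ⊆ {x | ∀ i, -x i ∈ D i})) ∧
    ((interior (thickCone η s) ∩
          {x | ∃ bb ∈ boxB η, ∃ d : Fin m → ℝ, (∀ i, d i ∈ D i) ∧ x = bb - d}).Nonempty ↔
        interior (thickCone η s) ⊆
          {x | ∃ bb ∈ boxB η, ∃ d : Fin m → ℝ, (∀ i, d i ∈ D i) ∧ x = bb - d}) ∧
    ((interior (thickCone η s) ∩
          {x | ∃ bb ∈ boxB η, ∃ d : Fin m → ℝ, (∀ i, d i ∈ D i) ∧ x = bb - d}).Nonempty ↔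
        sigmaCone s ⊆ {x | ∀ i, -x i ∈ D i}) := by

  have key := fun i => coord_key (η i) (hη i) (D i) (hD i) (s i)
  have hInt : interior (thickCone η s) =
      Set.univ.pi (fun i => interior (coordC (η i) (s i))) := by
    rw [thickCone_eq η hη s, interior_pi_set Set.finite_univ]
  have hBD := BD_eq η D
  have hσ := sigma_iff D s
  -- the interior is nonempty
  have hne : (interior (thickCone η s)).Nonempty := by
    rw [hInt]
    choose x hx using fun i => (key i).2.2
    exact ⟨x, fun i _ => hx i⟩
  -- sign condition implies the interior is contained in 𝔹 − D
  have hsub : (∀ i, ∀ t : ℝ, ((s i = 1 → 0 ≤ t) ∧ (s i = -1 → t ≤ 0) ∧ (s i = 0 → t = 0)) →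
      -t ∈ D i) → interior (thickCone η s) ⊆
        {x | ∃ bb ∈ boxB η, ∃ d : Fin m → ℝ, (∀ i, d i ∈ D i) ∧ x = bb - d} := by
    intro hP x hx
    rw [hInt] at hx
    rw [hBD]
    exact fun i _ => (key i).2.1 (hP i) (hx i (Set.mem_univ i))
  -- a common point yields the sign condition
  have hmeet : ∀ x ∈ interior (thickCone η s),
      x ∈ {x | ∃ bb ∈ boxB η, ∃ d : Fin m → ℝ, (∀ i, d i ∈ D i) ∧ x = bb - d} →
      ∀ i, ∀ t : ℝ, ((s i = 1 → 0 ≤ t) ∧ (s i = -1 → t ≤ 0) ∧ (s i = 0 → t = 0)) →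
        -t ∈ D i := by
    intro x hx hxB i
    rw [hInt] at hx
    rw [hBD] at hxB
    exact (key i).1.mp ⟨x i, hx i (Set.mem_univ i), hxB i (Set.mem_univ i)⟩
  refine ⟨⟨?_, ?_⟩, ⟨?_, ?_⟩, ⟨?_, ?_⟩⟩
  · rintro ⟨x, ⟨hxK, hxB⟩, hxI⟩
    exact ⟨⟨x, hxK, hxI⟩, hσ.mpr (hmeet x hxI hxB)⟩
  · rintro ⟨⟨x, hxK, hxI⟩, hs⟩
    exact ⟨x, ⟨hxK, hsub (hσ.mp hs) hxI⟩, hxI⟩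
  · rintro ⟨x, hxI, hxB⟩
    exact hsub (hmeet x hxI hxB)
  · intro h
    obtain ⟨x, hx⟩ := hne
    exact ⟨x, hx, h hx⟩
  · rintro ⟨x, hxI, hxB⟩
    exact hσ.mpr (hmeet x hxI hxB)
  · intro hs
    obtain ⟨x, hx⟩ := hne
    exact ⟨x, hx, hsub (hσ.mp hs) hx⟩
end
end
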